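/- If f : X → ℝ is α-continuous and X is countably α-compact, then f is bounded. -/
import Mathlib


def AlphaOpen {X : Type*} [TopologicalSpace X] (A : Set X) : Prop :=
  A ⊆ interior (closure (interior A))

def AlphaClosed {X : Type*} [TopologicalSpace X] (A : Set X) : Prop :=
  AlphaOpen Aᶜ

def AlphaContinuous {X Y : Type*} [TopologicalSpace X] [TopologicalSpace Y]
    (f : X → Y) : Prop :=
  ∀ V : Set Y, IsOpen V → AlphaOpen (f ⁻¹' V)

def CountablyAlphaCompact (X : Type*) [TopologicalSpace X] : Prop :=
  ∀ U : ℕ → Set X, (∀ n, AlphaOpen (U n)) → (⋃ n, U n) = Set.univ →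
    ∃ t : Finset ℕ, (⋃ n ∈ t, U n) = Set.univ

def AlphaCompact (X : Type*) [TopologicalSpace X] : Prop :=
  ∀ 𝒰 : Set (Set X), (∀ A ∈ 𝒰, AlphaOpen A) → ⋃₀ 𝒰 = Set.univ →
    ∃ 𝒱 ⊆ 𝒰, 𝒱.Finite ∧ ⋃₀ 𝒱 = Set.univ

def CountablyCompact (X : Type*) [TopologicalSpace X] : Prop :=
  ∀ U : ℕ → Set X, (∀ n, IsOpen (U n)) → (⋃ n, U n) = Set.univ →
    ∃ t : Finset ℕ, (⋃ n ∈ t, U n) = Set.univ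
theorem stmt12 {X : Type*} [TopologicalSpace X] (f : X → ℝ)
    (hf : AlphaContinuous f) (hX : CountablyAlphaCompact X) :
    ∃ C : ℝ, ∀ x, |f x| ≤ C := by
  set U : ℕ → Set X := fun n => f ⁻¹' {y | |y| < n} with hU
  have hopen : ∀ n : ℕ, AlphaOpen (U n) := fun n =>
    hf _ (isOpen_lt (continuous_abs) continuous_const)
  have hcov : (⋃ n, U n) = Set.univ := by
    ext x
    simp only [Set.mem_iUnion, Set.mem_univ, iff_true, hU, Set.mem_preimage, Set.mem_setOf_eq]
    exact exists_nat_gt |f x|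
  obtain ⟨t, ht⟩ := hX U hopen hcov
  refine ⟨(t.sup id : ℕ), fun x => ?_⟩
  have hx : x ∈ ⋃ n ∈ t, U n := ht ▸ Set.mem_univ x
  simp only [Set.mem_iUnion] at hx
  obtain ⟨n, hn, hxn⟩ := hx
  have : |f x| < n := hxn
  have hle : (n : ℝ) ≤ (t.sup id : ℕ) := by
    exact_mod_cast Finset.le_sup (f := id) hn
  linarith
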